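/- Let ABCD be a convex quadrilateral in ℝ² with Delaunay diagonal BD, and let Y = (y_A, y_B, y_C, y_D) be real values at the vertices. For a triangulation t, let f_t be the piecewise-linear interpolant of Y over t and DF(t, Y) = ∫_Q ‖∇f_t‖² dx. Then DF(t_{BD}, Y) ≤ DF(t_{AC}, Y) for every Y. -/

import Mathlib

open RealInnerProductSpace

/-- Counterclockwise orientation predicate for three planar points. -/
def ccw (A B C : EuclideanSpace ℝ (Fin 2)) : Prop :=
  0 < (B 0 - A 0) * (C 1 - A 1) - (B 1 - A 1) * (C 0 - A 0)

/-- The area of the planar triangle `ABC`. -/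
noncomputable def triArea (A B C : EuclideanSpace ℝ (Fin 2)) : ℝ :=
  |((B 0 - A 0) * (C 1 - A 1) - (B 1 - A 1) * (C 0 - A 0))| / 2

/-- The circumradius of the triangle `XYZ`. -/
noncomputable def circumRad {A B C : EuclideanSpace ℝ (Fin 2)}
    (h : AffineIndependent ℝ ![A, B, C]) : ℝ :=
  (⟨![A, B, C], h⟩ : Affine.Simplex ℝ (EuclideanSpace ℝ (Fin 2)) 2).circumradius

/-- The circumcenter of the triangle `XYZ`. -/
noncomputable def circumCtr {A B C : EuclideanSpace ℝ (Fin 2)}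
    (h : AffineIndependent ℝ ![A, B, C]) : EuclideanSpace ℝ (Fin 2) :=
  (⟨![A, B, C], h⟩ : Affine.Simplex ℝ (EuclideanSpace ℝ (Fin 2)) 2).circumcenter

/-- `g` is the (constant) gradient of the affine map `f`. -/
def IsGradient (f : EuclideanSpace ℝ (Fin 2) →ᵃ[ℝ] ℝ) (g : EuclideanSpace ℝ (Fin 2)) : Prop :=
  ∀ v, f.linear v = ⟪g, v⟫


private lemma grad_eq (f : EuclideanSpace ℝ (Fin 2) →ᵃ[ℝ] ℝ) (g : EuclideanSpace ℝ (Fin 2))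
    (hg : IsGradient f g) (P Q : EuclideanSpace ℝ (Fin 2)) :
    g 0 * (Q 0 - P 0) + g 1 * (Q 1 - P 1) = f Q - f P := by
  have h2 : f.linear (Q - P) = f Q - f P := by
    simpa using f.linearMap_vsub Q P
  have h := hg (Q - P)
  rw [h2] at h
  rw [h, PiLp.inner_apply]
  simp [RCLike.inner_apply, Fin.sum_univ_two]
  ring

private lemma norm_sq_eq (g : EuclideanSpace ℝ (Fin 2)) : ‖g‖ ^ 2 = g 0 ^ 2 + g 1 ^ 2 := by
  rw [← real_inner_self_eq_norm_sq, PiLp.inner_apply]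
  simp [RCLike.inner_apply, Fin.sum_univ_two]

private lemma dist_sq (x y : EuclideanSpace ℝ (Fin 2)) :
    dist x y ^ 2 = (x 0 - y 0) ^ 2 + (x 1 - y 1) ^ 2 := by
  rw [EuclideanSpace.dist_eq, Real.sq_sqrt (by positivity)]
  simp [Fin.sum_univ_two, Real.dist_eq, sq_abs]

set_option maxHeartbeats 1000000 in
private lemma key_lemma (p0 p1 q0 q1 r0 r1 yA yB yC yD u0 u1 v0 v1 w0 w1 x0 x1 om0 om1 rr : ℝ)
    (hSabd : 0 < (p0*r1-p1*r0)) (hSabc : 0 < (p0*q1-p1*q0)) (hSacd : 0 < (q0*r1-q1*r0)) (hSbcd : 0 < ((q0*r1-q1*r0)-(p0*r1-p1*r0)+(p0*q1-p1*q0)))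
    (hu0 : (p0*r1-p1*r0)*u0 = ((yB-yA)*r1-(yD-yA)*p1)) (hu1 : (p0*r1-p1*r0)*u1 = ((yD-yA)*p0-(yB-yA)*r0))
    (hv0 : ((q0*r1-q1*r0)-(p0*r1-p1*r0)+(p0*q1-p1*q0))*v0 = ((yC-yB)*(r1-p1)-(yD-yB)*(q1-p1))) (hv1 : ((q0*r1-q1*r0)-(p0*r1-p1*r0)+(p0*q1-p1*q0))*v1 = ((yD-yB)*(q0-p0)-(yC-yB)*(r0-p0)))
    (hw0 : (p0*q1-p1*q0)*w0 = ((yB-yA)*q1-(yC-yA)*p1)) (hw1 : (p0*q1-p1*q0)*w1 = ((yC-yA)*p0-(yB-yA)*q0))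
    (hx0 : (q0*r1-q1*r0)*x0 = ((yC-yA)*r1-(yD-yA)*q1)) (hx1 : (q0*r1-q1*r0)*x1 = ((yD-yA)*q0-(yC-yA)*r0))
    (hA2 : om0^2+om1^2 = rr^2) (hB2 : (p0-om0)^2+(p1-om1)^2 = rr^2)
    (hD2 : (r0-om0)^2+(r1-om1)^2 = rr^2)
    (hC2 : rr^2 < (q0-om0)^2+(q1-om1)^2) :
    (u0^2+u1^2)*((p0*r1-p1*r0)/2) + (v0^2+v1^2)*(((q0*r1-q1*r0)-(p0*r1-p1*r0)+(p0*q1-p1*q0))/2) ≤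
      (w0^2+w1^2)*((p0*q1-p1*q0)/2) + (x0^2+x1^2)*((q0*r1-q1*r0)/2) := by
  have hid : ((p0*r1-p1*r0)*(q0^2+q1^2) - (q0*r1-q1*r0)*(p0^2+p1^2) - (p0*q1-p1*q0)*(r0^2+r1^2)) = (p0*r1-p1*r0) * ((q0-om0)^2+(q1-om1)^2 - rr^2) := by
    linear_combination ((q0*r1-q1*r0)-(p0*r1-p1*r0)+(p0*q1-p1*q0))*hA2 - (q0*r1-q1*r0)*hB2 - (p0*q1-p1*q0)*hD2
  have hIn : 0 < ((p0*r1-p1*r0)*(q0^2+q1^2) - (q0*r1-q1*r0)*(p0^2+p1^2) - (p0*q1-p1*q0)*(r0^2+r1^2)) := by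
    rw [hid]; exact mul_pos hSabd (by linarith)
  have key : 2*(p0*q1-p1*q0)*(q0*r1-q1*r0)*(p0*r1-p1*r0)*((q0*r1-q1*r0)-(p0*r1-p1*r0)+(p0*q1-p1*q0))*((w0^2+w1^2)*((p0*q1-p1*q0)/2) + (x0^2+x1^2)*((q0*r1-q1*r0)/2) - (u0^2+u1^2)*((p0*r1-p1*r0)/2) - (v0^2+v1^2)*(((q0*r1-q1*r0)-(p0*r1-p1*r0)+(p0*q1-p1*q0))/2)) = ((p0*r1-p1*r0)*(q0^2+q1^2) - (q0*r1-q1*r0)*(p0^2+p1^2) - (p0*q1-p1*q0)*(r0^2+r1^2)) * (yA*((q0*r1-q1*r0)-(p0*r1-p1*r0)+(p0*q1-p1*q0)) - yB*(q0*r1-q1*r0) + yC*(p0*r1-p1*r0) - yD*(p0*q1-p1*q0))^2 := by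
    linear_combination ((q0*r1-q1*r0)*(p0*r1-p1*r0)*((q0*r1-q1*r0)-(p0*r1-p1*r0)+(p0*q1-p1*q0))*((p0*q1-p1*q0)*w0 + ((yB-yA)*q1-(yC-yA)*p1)))*hw0 + ((q0*r1-q1*r0)*(p0*r1-p1*r0)*((q0*r1-q1*r0)-(p0*r1-p1*r0)+(p0*q1-p1*q0))*((p0*q1-p1*q0)*w1 + ((yC-yA)*p0-(yB-yA)*q0)))*hw1 + ((p0*q1-p1*q0)*(p0*r1-p1*r0)*((q0*r1-q1*r0)-(p0*r1-p1*r0)+(p0*q1-p1*q0))*((q0*r1-q1*r0)*x0 + ((yC-yA)*r1-(yD-yA)*q1)))*hx0 + ((p0*q1-p1*q0)*(p0*r1-p1*r0)*((q0*r1-q1*r0)-(p0*r1-p1*r0)+(p0*q1-p1*q0))*((q0*r1-q1*r0)*x1 + ((yD-yA)*q0-(yC-yA)*r0)))*hx1 - ((p0*q1-p1*q0)*(q0*r1-q1*r0)*((q0*r1-q1*r0)-(p0*r1-p1*r0)+(p0*q1-p1*q0))*((p0*r1-p1*r0)*u0 + ((yB-yA)*r1-(yD-yA)*p1)))*hu0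 - ((p0*q1-p1*q0)*(q0*r1-q1*r0)*((q0*r1-q1*r0)-(p0*r1-p1*r0)+(p0*q1-p1*q0))*((p0*r1-p1*r0)*u1 + ((yD-yA)*p0-(yB-yA)*r0)))*hu1 - ((p0*q1-p1*q0)*(q0*r1-q1*r0)*(p0*r1-p1*r0)*(((q0*r1-q1*r0)-(p0*r1-p1*r0)+(p0*q1-p1*q0))*v0 + ((yC-yB)*(r1-p1)-(yD-yB)*(q1-p1))))*hv0 - ((p0*q1-p1*q0)*(q0*r1-q1*r0)*(p0*r1-p1*r0)*(((q0*r1-q1*r0)-(p0*r1-p1*r0)+(p0*q1-p1*q0))*v1 + ((yD-yB)*(q0-p0)-(yC-yB)*(r0-p0))))*hv1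
  have hprod : 0 < 2*(p0*q1-p1*q0)*(q0*r1-q1*r0)*(p0*r1-p1*r0)*((q0*r1-q1*r0)-(p0*r1-p1*r0)+(p0*q1-p1*q0)) := by positivity
  have h2 : 2*(p0*q1-p1*q0)*(q0*r1-q1*r0)*(p0*r1-p1*r0)*((q0*r1-q1*r0)-(p0*r1-p1*r0)+(p0*q1-p1*q0)) * 0 ≤ 2*(p0*q1-p1*q0)*(q0*r1-q1*r0)*(p0*r1-p1*r0)*((q0*r1-q1*r0)-(p0*r1-p1*r0)+(p0*q1-p1*q0))*((w0^2+w1^2)*((p0*q1-p1*q0)/2) + (x0^2+x1^2)*((q0*r1-q1*r0)/2) - (u0^2+u1^2)*((p0*r1-p1*r0)/2) - (v0^2+v1^2)*(((q0*r1-q1*r0)-(p0*r1-p1*r0)+(p0*q1-p1*q0))/2)) := by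
    rw [mul_zero, key]; exact mul_nonneg hIn.le (sq_nonneg _)
  have hfin : (0:ℝ) ≤ ((w0^2+w1^2)*((p0*q1-p1*q0)/2) + (x0^2+x1^2)*((q0*r1-q1*r0)/2) - (u0^2+u1^2)*((p0*r1-p1*r0)/2) - (v0^2+v1^2)*(((q0*r1-q1*r0)-(p0*r1-p1*r0)+(p0*q1-p1*q0))/2)) := le_of_mul_le_mul_left h2 hprod
  linarith [hfin]

set_option maxHeartbeats 1000000 in
/-- Rippa's lemma, four-point case: if `BD` is the Delaunay diagonal of the convex
quadrilateral `ABCD`, then for any vertex values `Y` the Dirichlet energy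
`DF(t, Y) = ∫_Q ‖∇f_t‖²` (written triangle-by-triangle as `‖∇f‖²·area`, since the
gradient of the piecewise-linear interpolant is constant on each triangle) satisfies
`DF(t_BD, Y) ≤ DF(t_AC, Y)`. -/
theorem rippa_four_point (A B C D : EuclideanSpace ℝ (Fin 2))
    (hconv : ccw A B C ∧ ccw B C D ∧ ccw C D A ∧ ccw D A B)
    (hABD : AffineIndependent ℝ ![A, B, D])
    (hDel : dist C (circumCtr hABD) > circumRad hABD)
    (yA yB yC yD : ℝ)
    (fABD fBCD fABC fACD : EuclideanSpace ℝ (Fin 2) →ᵃ[ℝ] ℝ)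
    (gABD gBCD gABC gACD : EuclideanSpace ℝ (Fin 2))
    (hfABD : fABD A = yA ∧ fABD B = yB ∧ fABD D = yD)
    (hfBCD : fBCD B = yB ∧ fBCD C = yC ∧ fBCD D = yD)
    (hfABC : fABC A = yA ∧ fABC B = yB ∧ fABC C = yC)
    (hfACD : fACD A = yA ∧ fACD C = yC ∧ fACD D = yD)
    (hgABD : IsGradient fABD gABD) (hgBCD : IsGradient fBCD gBCD)
    (hgABC : IsGradient fABC gABC) (hgACD : IsGradient fACD gACD) :
    ‖gABD‖ ^ 2 * triArea A B D + ‖gBCD‖ ^ 2 * triArea B C D ≤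
      ‖gABC‖ ^ 2 * triArea A B C + ‖gACD‖ ^ 2 * triArea A C D := by

  obtain ⟨h1c, h2c, h3c, h4c⟩ := hconv
  unfold ccw at h1c h2c h3c h4c
  have euAB := grad_eq fABD gABD hgABD A B
  rw [hfABD.1, hfABD.2.1] at euAB
  have euAD := grad_eq fABD gABD hgABD A D
  rw [hfABD.1, hfABD.2.2] at euAD
  have evBC := grad_eq fBCD gBCD hgBCD B C
  rw [hfBCD.1, hfBCD.2.1] at evBC
  have evBD := grad_eq fBCD gBCD hgBCD B D
  rw [hfBCD.1, hfBCD.2.2] at evBD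
  have ewAB := grad_eq fABC gABC hgABC A B
  rw [hfABC.1, hfABC.2.1] at ewAB
  have ewAC := grad_eq fABC gABC hgABC A C
  rw [hfABC.1, hfABC.2.2] at ewAC
  have exAC := grad_eq fACD gACD hgACD A C
  rw [hfACD.1, hfACD.2.1] at exAC
  have exAD := grad_eq fACD gACD hgACD A D
  rw [hfACD.1, hfACD.2.2] at exAD
  have hA2 : (A 0 - circumCtr hABD 0) ^ 2 + (A 1 - circumCtr hABD 1) ^ 2 = circumRad hABD ^ 2 := by
    rw [← dist_sq]; congr 1
    exact (⟨![A, B, D], hABD⟩ : Affine.Simplex ℝ (EuclideanSpace ℝ (Fin 2)) 2).dist_circumcenter_eq_circumradius 0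
  have hB2 : (B 0 - circumCtr hABD 0) ^ 2 + (B 1 - circumCtr hABD 1) ^ 2 = circumRad hABD ^ 2 := by
    rw [← dist_sq]; congr 1
    exact (⟨![A, B, D], hABD⟩ : Affine.Simplex ℝ (EuclideanSpace ℝ (Fin 2)) 2).dist_circumcenter_eq_circumradius 1
  have hD2 : (D 0 - circumCtr hABD 0) ^ 2 + (D 1 - circumCtr hABD 1) ^ 2 = circumRad hABD ^ 2 := by
    rw [← dist_sq]; congr 1
    exact (⟨![A, B, D], hABD⟩ : Affine.Simplex ℝ (EuclideanSpace ℝ (Fin 2)) 2).dist_circumcenter_eq_circumradius 2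
  have hR0 : 0 ≤ circumRad hABD := by
    have hdA : dist A (circumCtr hABD) = circumRad hABD :=
      (⟨![A, B, D], hABD⟩ : Affine.Simplex ℝ (EuclideanSpace ℝ (Fin 2)) 2).dist_circumcenter_eq_circumradius 0
    rw [← hdA]; exact dist_nonneg
  have hC2 : circumRad hABD ^ 2 < (C 0 - circumCtr hABD 0) ^ 2 + (C 1 - circumCtr hABD 1) ^ 2 := by
    rw [← dist_sq]
    exact pow_lt_pow_left₀ hDel hR0 (by norm_num)
  rw [norm_sq_eq gABD, norm_sq_eq gBCD, norm_sq_eq gABC, norm_sq_eq gACD]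
  unfold triArea
  have hSabd : 0 < (B 0 - A 0) * (D 1 - A 1) - (B 1 - A 1) * (D 0 - A 0) := by linarith [h4c]
  have hSacd : 0 < (C 0 - A 0) * (D 1 - A 1) - (C 1 - A 1) * (D 0 - A 0) := by linarith [h3c]
  rw [abs_of_pos hSabd, abs_of_pos h2c, abs_of_pos h1c, abs_of_pos hSacd]
  set a0 := A 0; set a1 := A 1; set b0 := B 0; set b1 := B 1
  set c0 := C 0; set c1 := C 1; set d0 := D 0; set d1 := D 1
  set o0 := circumCtr hABD 0; set o1 := circumCtr hABD 1; set rr := circumRad hABD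
  set u0 := gABD 0; set u1 := gABD 1; set v0 := gBCD 0; set v1 := gBCD 1
  set w0 := gABC 0; set w1 := gABC 1; set x0 := gACD 0; set x1 := gACD 1
  have hu0 : ((b0-a0)*(d1-a1)-(b1-a1)*(d0-a0)) * u0 = ((yB-yA)*(d1-a1)-(yD-yA)*(b1-a1)) := by linear_combination (d1-a1)*euAB - (b1-a1)*euAD
  have hu1 : ((b0-a0)*(d1-a1)-(b1-a1)*(d0-a0)) * u1 = ((yD-yA)*(b0-a0)-(yB-yA)*(d0-a0)) := by linear_combination (b0-a0)*euAD - (d0-a0)*euAB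
  have hv0 : ((c0-b0)*(d1-b1)-(c1-b1)*(d0-b0)) * v0 = ((yC-yB)*(d1-b1)-(yD-yB)*(c1-b1)) := by linear_combination (d1-b1)*evBC - (c1-b1)*evBD
  have hv1 : ((c0-b0)*(d1-b1)-(c1-b1)*(d0-b0)) * v1 = ((yD-yB)*(c0-b0)-(yC-yB)*(d0-b0)) := by linear_combination (c0-b0)*evBD - (d0-b0)*evBC
  have hw0 : ((b0-a0)*(c1-a1)-(b1-a1)*(c0-a0)) * w0 = ((yB-yA)*(c1-a1)-(yC-yA)*(b1-a1)) := by linear_combination (c1-a1)*ewAB - (b1-a1)*ewAC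
  have hw1 : ((b0-a0)*(c1-a1)-(b1-a1)*(c0-a0)) * w1 = ((yC-yA)*(b0-a0)-(yB-yA)*(c0-a0)) := by linear_combination (b0-a0)*ewAC - (c0-a0)*ewAB
  have hx0 : ((c0-a0)*(d1-a1)-(c1-a1)*(d0-a0)) * x0 = ((yC-yA)*(d1-a1)-(yD-yA)*(c1-a1)) := by linear_combination (d1-a1)*exAC - (c1-a1)*exAD
  have hx1 : ((c0-a0)*(d1-a1)-(c1-a1)*(d0-a0)) * x1 = ((yD-yA)*(c0-a0)-(yC-yA)*(d0-a0)) := by linear_combination (c0-a0)*exAD - (d0-a0)*exAC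
  have main := key_lemma (b0-a0) (b1-a1) (c0-a0) (c1-a1) (d0-a0) (d1-a1) yA yB yC yD
    u0 u1 v0 v1 w0 w1 x0 x1 (o0-a0) (o1-a1) rr
    (by linarith [hSabd]) (by linarith [h1c]) (by linarith [hSacd]) (by linarith [h2c])
    (by linear_combination hu0) (by linear_combination hu1)
    (by linear_combination hv0) (by linear_combination hv1)
    (by linear_combination hw0) (by linear_combination hw1)
    (by linear_combination hx0) (by linear_combination hx1)
    (by linear_combination hA2) (by linear_combination hB2) (by linear_combination hD2)
    (by linarith [hC2])
  linarith [main]
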